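/- Let G = (V, E) be a finite simple graph, let w : V → ℝ satisfy w(v) > 0 for every v ∈ V, let W = Σ_{v∈V} w(v), and let z > 0 be a real number. If w(u) + w(v) ≥ W/z for every edge uv ∈ E, then the function x defined by x(v) = min(z·w(v)/W, 1) is a fractional vertex cover of G of size at most z. -/

import Mathlib

/-- termination guarantee of the MWU algorithm for fractional vertex cover. -/
theorem stmt_0 {V : Type*} [Fintype V] (G : SimpleGraph V) (w : V → ℝ)
    (hw : ∀ v, 0 < w v) (z : ℝ) (hz : 0 < z)
    (hedge : ∀ ⦃u v : V⦄, G.Adj u v → (∑ t, w t) / z ≤ w u + w v) :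
    (∀ v, 0 ≤ min (z * w v / (∑ t, w t)) 1 ∧ min (z * w v / (∑ t, w t)) 1 ≤ 1) ∧
    (∀ ⦃u v : V⦄, G.Adj u v →
      1 ≤ min (z * w u / (∑ t, w t)) 1 + min (z * w v / (∑ t, w t)) 1) ∧
    (∑ v, min (z * w v / (∑ t, w t)) 1) ≤ z := by
  rcases isEmpty_or_nonempty V with hV | hV
  · exact ⟨fun v => isEmptyElim v, fun u v h => isEmptyElim u, by simp [hz.le]⟩
  have hWpos : 0 < ∑ t, w t := Finset.sum_pos (fun i _ => hw i) Finset.univ_nonempty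
  have hnn : ∀ v, (0:ℝ) ≤ z * w v / (∑ t, w t) :=
    fun v => div_nonneg (mul_pos hz (hw v)).le hWpos.le
  refine ⟨fun v => ⟨le_min (hnn v) one_pos.le, min_le_right _ _⟩, ?_, ?_⟩
  · intro u v h
    have h1 : 1 ≤ z * w u / (∑ t, w t) + z * w v / (∑ t, w t) := by
      have h2 := hedge h
      rw [div_le_iff₀ hz] at h2
      rw [← add_div, le_div_iff₀ hWpos]
      nlinarith
    rcases le_or_gt 1 (z * w u / (∑ t, w t)) with h2 | h2
    · rw [min_eq_right h2]
      have := le_min (hnn v) one_pos.le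
      linarith
    rcases le_or_gt 1 (z * w v / (∑ t, w t)) with h3 | h3
    · rw [min_eq_right h3]
      have := le_min (hnn u) one_pos.le
      linarith
    · rw [min_eq_left h2.le, min_eq_left h3.le]; linarith
  · calc ∑ v, min (z * w v / (∑ t, w t)) 1
        ≤ ∑ v, z * w v / (∑ t, w t) := Finset.sum_le_sum (fun i _ => min_le_left _ _)
      _ = z := by
          rw [← Finset.sum_div, ← Finset.mul_sum]
          field_simp
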